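/- Let φ_n : Δ → ℝ (n ∈ ℕ) be exponentially concave functions, let v : Δ → ℝ^d, and let N ⊆ Δ be a set of (d−1)-dimensional Lebesgue measure zero such that for every x ∈ Δ∖N there exist y_n ∈ ∂φ_n(x) with y_n → v(x) as n → ∞. Then there exists an exponentially concave function φ : Δ → ℝ such that v(x) ∈ ∂φ(x) for every x ∈ Δ∖N. -/

import Mathlib

open scoped BigOperators
open MeasureTheory Filter

/-- The open unit simplex in `ℝ^d`. -/
def openSimplex (d : ℕ) : Set (Fin d → ℝ) :=
  {x | (∀ i, 0 < x i) ∧ ∑ i, x i = 1}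

/-- A function `φ` on the open simplex is exponentially concave if `e^φ` is concave there. -/
def ExpConcave {d : ℕ} (φ : (Fin d → ℝ) → ℝ) : Prop :=
  ConcaveOn ℝ (openSimplex d) (fun x => Real.exp (φ x))

/-- The superdifferential of `φ` at `x` (relative to the open simplex). -/
def superdiff {d : ℕ} (φ : (Fin d → ℝ) → ℝ) (x : Fin d → ℝ) : Set (Fin d → ℝ) :=
  {y | ∀ q ∈ openSimplex d, φ q ≤ φ x + ∑ k, y k * (q k - x k)}

/-- The `(d-1)`-dimensional Lebesgue measure on the hyperplane `{∑ xᶦ = 1}`. -/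
noncomputable def simplexMeasure (d : ℕ) : Measure (Fin d → ℝ) :=
  Measure.map
    (fun y : Fin (d - 1) → ℝ => fun i : Fin d =>
      if h : (i : ℕ) < d - 1 then y ⟨(i : ℕ), h⟩ else 1 - ∑ j, y j)
    volume

section Aux

variable {d : ℕ}

lemma openSimplex_convex (d : ℕ) : Convex ℝ (openSimplex d) := by
  intro x hx y hy a b ha hb hab
  refine ⟨fun i => ?_, ?_⟩
  · rcases eq_or_lt_of_le ha with h | h
    · simp only [Pi.add_apply, Pi.smul_apply, smul_eq_mul, ← h]
      have hb1 : b = 1 := by linarith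
      simpa [hb1] using hy.1 i
    · have : 0 < a * x i := mul_pos h (hx.1 i)
      have : 0 ≤ b * y i := mul_nonneg hb (hy.1 i).le
      simp only [Pi.add_apply, Pi.smul_apply, smul_eq_mul]
      linarith
  · simp only [Pi.add_apply, Pi.smul_apply, smul_eq_mul]
    rw [Finset.sum_add_distrib, ← Finset.mul_sum, ← Finset.mul_sum, hx.2, hy.2]
    simpa using hab

end Aux

/-- if at a.e. point of the simplex some supergradients of exponentially
concave functions `φ_n` converge to `v(x)`, then `v` is (off the null set) a supergradient
map of a single exponentially concave function. -/
theorem statement5 {d : ℕ} (hd : 2 ≤ d)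
    (φ : ℕ → (Fin d → ℝ) → ℝ) (hφ : ∀ n, ExpConcave (φ n))
    (v : (Fin d → ℝ) → Fin d → ℝ)
    (N : Set (Fin d → ℝ)) (hNsub : N ⊆ openSimplex d) (hNnull : simplexMeasure d N = 0)
    (hconv : ∀ x ∈ openSimplex d \ N, ∃ y : ℕ → Fin d → ℝ,
      (∀ n, y n ∈ superdiff (φ n) x) ∧ Tendsto y atTop (nhds (v x))) :
    ∃ ψ : (Fin d → ℝ) → ℝ, ExpConcave ψ ∧
      ∀ x ∈ openSimplex d \ N, v x ∈ superdiff ψ x := by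
  classical
  by_cases hne : (openSimplex d \ N).Nonempty
  swap
  · -- vacuous case: take ψ = 0
    refine ⟨fun _ => 0, ?_, ?_⟩
    · simpa [ExpConcave] using concaveOn_const (1 : ℝ) (openSimplex_convex d)
    · intro x hx
      exact absurd ⟨x, hx⟩ hne
  obtain ⟨x₀, hx₀⟩ := hne
  obtain ⟨y₀, hy₀, hy₀t⟩ := hconv x₀ hx₀
  -- the normalized concave functions
  set g : ℕ → (Fin d → ℝ) → ℝ := fun n q => Real.exp (φ n q - φ n x₀) with hg
  have hgpos : ∀ n q, 0 < g n q := fun n q => Real.exp_pos _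
  have hgconc : ∀ n, ConcaveOn ℝ (openSimplex d) (g n) := by
    intro n
    have h := (hφ n).smul (c := Real.exp (-(φ n x₀))) (Real.exp_nonneg _)
    convert h using 1
    case e'_4 => rfl
    case e'_10 => rfl
    funext q
    simp [hg, Real.exp_sub, Real.exp_neg, div_eq_mul_inv, mul_comm]
  -- the key supergradient inequality for g
  have hgkey : ∀ n (x : Fin d → ℝ) (yn : Fin d → ℝ), yn ∈ superdiff (φ n) x →
      ∀ q ∈ openSimplex d, g n q ≤ g n x * Real.exp (∑ k, yn k * (q k - x k)) := by
    intro n x yn hyn q hq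
    have h := hyn q hq
    have : φ n q - φ n x₀ ≤ (φ n x - φ n x₀) + ∑ k, yn k * (q k - x k) := by linarith
    calc g n q ≤ Real.exp ((φ n x - φ n x₀) + ∑ k, yn k * (q k - x k)) :=
          Real.exp_le_exp.2 this
      _ = g n x * Real.exp (∑ k, yn k * (q k - x k)) := Real.exp_add _ _
  have hgx₀ : ∀ n, g n x₀ = 1 := by intro n; simp [hg]
  -- upper bound: for each q in the simplex, (g n q)ₙ is bounded above
  have hub : ∀ q ∈ openSimplex d, IsBoundedUnder (· ≤ ·) atTop (fun n => g n q) := by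
    intro q hq
    have hSt : Tendsto (fun n => Real.exp (∑ k, y₀ n k * (q k - x₀ k))) atTop
        (nhds (Real.exp (∑ k, v x₀ k * (q k - x₀ k)))) := by
      apply Real.continuous_exp.continuousAt.tendsto.comp
      apply tendsto_finset_sum
      intro k _
      exact (tendsto_pi_nhds.1 hy₀t k).mul tendsto_const_nhds
    refine (hSt.isBoundedUnder_le).mono_le ?_
    filter_upwards with n
    simpa [hgx₀ n] using hgkey n x₀ (y₀ n) (hy₀ n) q hq
  have hlb : ∀ q, IsBoundedUnder (· ≥ ·) atTop (fun n => g n q) :=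
    fun q => ⟨0, Filter.eventually_map.2 (Eventually.of_forall fun n => (hgpos n q).le)⟩
  -- the limit function
  set F : (Fin d → ℝ) → ℝ := fun q => liminf (fun n => g n q) atTop with hF
  have hFnonneg : ∀ q ∈ openSimplex d, 0 ≤ F q := by
    intro q hq
    exact le_liminf_of_le (hub q hq).isCoboundedUnder_ge
      (Eventually.of_forall fun n => (hgpos n q).le)
  have hFx₀ : F x₀ = 1 := by simp [hF, hgx₀, liminf_const]
  -- concavity of F on the simplex
  have hFconc : ConcaveOn ℝ (openSimplex d) F := by
    refine ⟨openSimplex_convex d, ?_⟩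
    intro x hx y hy a b ha hb hab
    simp only [smul_eq_mul]
    refine le_of_forall_pos_le_add ?_
    intro ε hε
    have hevx : ∀ᶠ n in atTop, F x - ε < g n x :=
      eventually_lt_of_lt_liminf (by linarith : F x - ε < F x) (hlb x)
    have hevy : ∀ᶠ n in atTop, F y - ε < g n y :=
      eventually_lt_of_lt_liminf (by linarith : F y - ε < F y) (hlb y)
    have hmem : a • x + b • y ∈ openSimplex d := openSimplex_convex d hx hy ha hb hab
    have key : a * F x + b * F y - ε ≤ F (a • x + b • y) := by
      refine le_liminf_of_le (hub _ hmem).isCoboundedUnder_ge ?_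
      filter_upwards [hevx, hevy] with n hnx hny
      have hcc := (hgconc n).2 hx hy ha hb hab
      simp only [smul_eq_mul] at hcc
      have h1 : a * (F x - ε) ≤ a * g n x := mul_le_mul_of_nonneg_left hnx.le ha
      have h2 : b * (F y - ε) ≤ b * g n y := mul_le_mul_of_nonneg_left hny.le hb
      nlinarith
    linarith
  -- positivity of F on the whole simplex
  have hx₀S : x₀ ∈ openSimplex d := hx₀.1
  have hFpos : ∀ x ∈ openSimplex d, 0 < F x := by
    intro x hx
    have hdpos : 0 < d := by omega
    have : Nonempty (Fin d) := ⟨⟨0, hdpos⟩⟩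
    have hne' : (Finset.univ : Finset (Fin d)).Nonempty := Finset.univ_nonempty
    set m : ℝ := Finset.univ.inf' hne' x with hm
    have hmpos : 0 < m := by
      rw [hm, Finset.lt_inf'_iff]
      exact fun i _ => hx.1 i
    have hmle : ∀ i, m ≤ x i := fun i => Finset.inf'_le _ (Finset.mem_univ i)
    set ε : ℝ := m / 2 with hεdef
    have hεpos : 0 < ε := by positivity
    -- the auxiliary point r
    set r : Fin d → ℝ := fun i => x i + ε * (x i - x₀ i) with hr
    have hx₀le1 : ∀ i, x₀ i ≤ 1 := by
      intro i
      have h := hx₀S.2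
      have : ∀ j ∈ Finset.univ, 0 ≤ x₀ j := fun j _ => (hx₀S.1 j).le
      calc x₀ i ≤ ∑ j, x₀ j := Finset.single_le_sum this (Finset.mem_univ i)
        _ = 1 := h
    have hrS : r ∈ openSimplex d := by
      constructor
      · intro i
        have h1 : x i - x₀ i ≥ -1 := by
          have := (hx.1 i).le
          have := hx₀le1 i
          linarith
        have : ε * (x i - x₀ i) ≥ ε * (-1) := mul_le_mul_of_nonneg_left h1 hεpos.le
        have hxi := hmle i
        simp only [hr]
        have : ε * (x i - x₀ i) ≥ -ε := by linarith
        have : x i + ε * (x i - x₀ i) ≥ m - ε := by linarith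
        have : m - ε = m / 2 := by rw [hεdef]; ring
        linarith
      · simp only [hr]
        rw [show (fun i => x i + ε * (x i - x₀ i)) = fun i => (1 + ε) * x i - ε * x₀ i by
          funext i; ring]
        rw [Finset.sum_sub_distrib, ← Finset.mul_sum, ← Finset.mul_sum, hx.2, hx₀S.2]
        ring
    -- x is a convex combination of x₀ and r
    set t : ℝ := ε / (1 + ε) with ht
    have h1ε : (0:ℝ) < 1 + ε := by linarith
    have htpos : 0 < t := by positivity
    have ht1 : t < 1 := by
      rw [ht, div_lt_one h1ε]; linarith
    have hxeq : t • x₀ + (1 - t) • r = x := by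
      funext i
      simp only [Pi.add_apply, Pi.smul_apply, smul_eq_mul, hr, ht]
      field_simp
      ring
    have hcc := hFconc.2 hx₀S hrS htpos.le (by linarith : (0:ℝ) ≤ 1 - t) (by ring)
    rw [hxeq] at hcc
    have := hFnonneg r hrS
    simp only [smul_eq_mul, hFx₀] at hcc
    nlinarith
  -- key superdifferential inequality for F
  have hkey : ∀ x ∈ openSimplex d \ N, ∀ q ∈ openSimplex d,
      F q ≤ F x * Real.exp (∑ k, v x k * (q k - x k)) := by
    intro x hx q hq
    obtain ⟨yx, hyx, hyxt⟩ := hconv x hx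
    set S : ℝ := ∑ k, v x k * (q k - x k) with hS
    have hSt : Tendsto (fun n => Real.exp (∑ k, yx n k * (q k - x k))) atTop
        (nhds (Real.exp S)) := by
      apply Real.continuous_exp.continuousAt.tendsto.comp
      apply tendsto_finset_sum
      intro k _
      exact (tendsto_pi_nhds.1 hyxt k).mul tendsto_const_nhds
    have hEpos : (0:ℝ) < Real.exp S := Real.exp_pos _
    -- the δ-approximate inequality
    have hδ : ∀ δ : ℝ, 0 < δ → F q ≤ (F x + δ) * (Real.exp S + δ) := by
      intro δ hδpos
      have hfreq : ∃ᶠ n in atTop, g n x < F x + δ :=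
        frequently_lt_of_liminf_lt (hub x hx.1).isCoboundedUnder_ge (by linarith)
      have hev : ∀ᶠ n in atTop, Real.exp (∑ k, yx n k * (q k - x k)) < Real.exp S + δ :=
        hSt.eventually (Filter.Tendsto.eventually_lt_const (by linarith) tendsto_id)
      refine liminf_le_of_frequently_le ?_ (hlb q)
      refine (hfreq.and_eventually hev).mono ?_
      rintro n ⟨h1, h2⟩
      have h3 := hgkey n x (yx n) (hyx n) q hq
      calc g n q ≤ g n x * Real.exp (∑ k, yx n k * (q k - x k)) := h3
        _ ≤ (F x + δ) * (Real.exp S + δ) := by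
            apply mul_le_mul h1.le h2.le (Real.exp_nonneg _)
            linarith [hFnonneg x hx.1]
    -- pass to the limit δ → 0
    refine le_of_forall_pos_le_add ?_
    intro ε hε
    set δ : ℝ := min 1 (ε / (F x + Real.exp S + 1)) with hδdef
    have hden : (0:ℝ) < F x + Real.exp S + 1 := by linarith [hFnonneg x hx.1]
    have hδpos : 0 < δ := lt_min one_pos (by positivity)
    have hδ1 : δ ≤ 1 := min_le_left _ _
    have hδ2 : δ ≤ ε / (F x + Real.exp S + 1) := min_le_right _ _
    have h := hδ δ hδpos
    have h2 : δ * (F x + Real.exp S + 1) ≤ ε := by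
      rw [← le_div_iff₀ hden]; exact hδ2
    nlinarith [hFnonneg x, hEpos]
  -- conclusion
  refine ⟨fun q => Real.log (F q), ?_, ?_⟩
  · refine ⟨openSimplex_convex d, ?_⟩
    intro x hx y hy a b ha hb hab
    have hmem : a • x + b • y ∈ openSimplex d := openSimplex_convex d hx hy ha hb hab
    simp only [Real.exp_log (hFpos x hx), Real.exp_log (hFpos y hy),
      Real.exp_log (hFpos _ hmem)]
    exact hFconc.2 hx hy ha hb hab
  · intro x hx q hq
    have h := hkey x hx q hq
    have hFq := hFpos q hq
    have hFx := hFpos x (hx.1)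
    calc Real.log (F q) ≤ Real.log (F x * Real.exp (∑ k, v x k * (q k - x k))) :=
          Real.log_le_log hFq h
      _ = Real.log (F x) + ∑ k, v x k * (q k - x k) := by
          rw [Real.log_mul hFx.ne' (Real.exp_pos _).ne', Real.log_exp]
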